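/- With B and ψ the relativised collapsing hierarchy: for every ordinal γ, ψ(γ+1) ≤ (ψ γ)^Γ, where δ^Γ denotes the least strongly critical ordinal strictly greater than δ. -/

import Mathlib

open Ordinal

/-- The binary Veblen function: `veblen 0 β = ω ^ β`, and for `α > 0`,
`veblen α` enumerates the common fixed points of `veblen γ` for `γ < α`. -/
noncomputable def veblen : Ordinal → Ordinal → Ordinal :=
  WellFounded.fix Ordinal.lt_wf
    (fun α ih => if α = 0 then fun β => omega0 ^ β
      else derivFamily.{0,0} (familyOfBFamily α (fun ξ h => ih ξ h)))

/-- The set of strongly critical ordinals. -/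
def StronglyCritical (γ : Ordinal) : Prop := _root_.veblen γ 0 = γ

/-- `Gamma β` is the `β`-th strongly critical ordinal. -/
noncomputable def Gamma : Ordinal → Ordinal :=
  enumOrd {γ | StronglyCritical γ}

/-- The least uncountable cardinal (as an ordinal) greater than `θ`. -/
noncomputable def OmegaB (θ : Ordinal) : Ordinal :=
  sInf {o | θ < o ∧ o.card.ord = o ∧ Cardinal.aleph0 < o.card}

/-- Closure of `{0, Ω} ∪ {Γ_β : β ≤ θ}` under `+`, `veblen` and the
given partial collapsing function `f` on arguments below `α`. -/
def closB (θ α : Ordinal) (f : ∀ ξ, ξ < α → Ordinal) : Set Ordinal :=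
  ⋂₀ {S : Set Ordinal |
      0 ∈ S ∧ OmegaB θ ∈ S ∧ (∀ β ≤ θ, Gamma β ∈ S) ∧
      (∀ x ∈ S, ∀ y ∈ S, x + y ∈ S) ∧
      (∀ x ∈ S, ∀ y ∈ S, _root_.veblen x y ∈ S) ∧
      (∀ ξ (h : ξ < α), ξ ∈ S → f ξ h ∈ S)}

/-- The relativised collapsing function `ψ_θ`. -/
noncomputable def psiB (θ : Ordinal) : Ordinal → Ordinal :=
  WellFounded.fix Ordinal.lt_wf
    (fun α ih => sInf {β | β ∉ closB θ α (fun ξ h => ih ξ h)})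

/-- The relativised collapsing hierarchy `B_θ(α)`. -/
def BB (θ α : Ordinal) : Set Ordinal :=
  closB θ α (fun ξ _ => psiB θ ξ)

/-- The least strongly critical ordinal strictly above `δ`. -/
noncomputable def gammaSucc (δ : Ordinal) : Ordinal :=
  sInf {γ | δ < γ ∧ StronglyCritical γ}

theorem veblen_def (α : Ordinal) :
    _root_.veblen α = if α = 0 then (fun β => omega0 ^ β)
      else derivFamily.{0,0} (familyOfBFamily α (fun ξ _ => _root_.veblen ξ)) :=
  WellFounded.fix_eq _ _ α

theorem veblen_zero (b : Ordinal) : _root_.veblen 0 b = omega0 ^ b := by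
  rw [_root_.veblen_def]; simp

theorem veblen_pos {α : Ordinal} (h : α ≠ 0) :
    _root_.veblen α = derivFamily.{0,0} (familyOfBFamily α (fun ξ _ => _root_.veblen ξ)) := by
  rw [_root_.veblen_def, if_neg h]

theorem veblen_isNormal (α : Ordinal) : Order.IsNormal (_root_.veblen α) := by
  rw [_root_.veblen_def]; split
  · exact isNormal_opow one_lt_omega0
  · exact isNormal_derivFamily _

theorem veblen_fp {ξ α : Ordinal} (h : ξ < α) (b : Ordinal) :
    _root_.veblen ξ (_root_.veblen α b) = _root_.veblen α b := by
  rw [_root_.veblen_pos (pos_iff_ne_zero.1 ((zero_le : (0 : Ordinal) ≤ ξ).trans_lt h))]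
  have := derivFamily_fp (f := familyOfBFamily α (fun ξ _ => _root_.veblen ξ))
    (i := enum (α := α.ToType) (· < ·) ⟨ξ, h.trans_eq (type_toType _).symm⟩)
    (by rw [familyOfBFamily_enum α (fun ξ _ => _root_.veblen ξ) ξ h]; exact _root_.veblen_isNormal ξ) b
  rwa [familyOfBFamily_enum α (fun ξ _ => _root_.veblen ξ) ξ h] at this

theorem le_veblen_zero (α : Ordinal) : α ≤ _root_.veblen α 0 := by
  refine Ordinal.lt_wf.induction (C := fun α => α ≤ _root_.veblen α 0) α ?_
  intro α ih
  rcases eq_or_ne α 0 with rfl | h0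
  · exact (zero_le : (0 : Ordinal) ≤ _)
  by_contra hlt
  push_neg at hlt
  have hfp : _root_.veblen (_root_.veblen α 0) (_root_.veblen α 0) = _root_.veblen α 0 := _root_.veblen_fp hlt 0
  rcases eq_or_ne (_root_.veblen α 0) 0 with hv0 | hv0
  · rw [hv0, _root_.veblen_zero, opow_zero] at hfp
    exact one_ne_zero hfp
  · have h1 : _root_.veblen (_root_.veblen α 0) 0 < _root_.veblen (_root_.veblen α 0) (_root_.veblen α 0) :=
      (_root_.veblen_isNormal _).strictMono (pos_iff_ne_zero.2 hv0)
    rw [hfp] at h1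
    exact h1.not_ge (ih _ hlt)

theorem le_veblen (α b : Ordinal) : b ≤ _root_.veblen α b := (_root_.veblen_isNormal α).strictMono.le_apply

theorem left_le_veblen (α b : Ordinal) : α ≤ _root_.veblen α b :=
  (_root_.le_veblen_zero α).trans ((_root_.veblen_isNormal α).monotone (zero_le : (0 : Ordinal) ≤ b))

theorem sc_of_commonFp {t : Ordinal} (ht : t ≠ 0)
    (h : ∀ ξ < t, _root_.veblen ξ t = t) : StronglyCritical t := by
  obtain ⟨b, hb⟩ := (fp_iff_derivFamily (f := familyOfBFamily t (fun ξ _ => _root_.veblen ξ))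
    (fun i => _root_.veblen_isNormal _) (a := t)).1
    (fun i => h _ ((typein_lt_type _ i).trans_eq (type_toType t)))
  have hb' : _root_.veblen t b = t := by rw [_root_.veblen_pos ht]; exact hb
  exact le_antisymm (((_root_.veblen_isNormal t).monotone (zero_le : (0 : Ordinal) ≤ b)).trans hb'.le)
    (_root_.le_veblen_zero t)

theorem sc_fp {t ξ : Ordinal} (hsc : StronglyCritical t) (hξ : ξ < t) :
    _root_.veblen ξ t = t := by
  conv_lhs => rw [← hsc]
  rw [_root_.veblen_fp hξ 0, hsc]

theorem sc_ne_zero {t : Ordinal} (hsc : StronglyCritical t) : t ≠ 0 := by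
  rintro rfl
  rw [StronglyCritical, _root_.veblen_zero, opow_zero] at hsc
  exact one_ne_zero hsc

theorem sc_principal_add {t : Ordinal} (hsc : StronglyCritical t) :
    Principal (· + ·) t := by
  have h := sc_fp hsc (pos_iff_ne_zero.2 (sc_ne_zero hsc))
  rw [_root_.veblen_zero] at h
  rw [← h]
  exact principal_add_omega0_opow t

theorem sc_veblen_closed {t x y : Ordinal} (hsc : StronglyCritical t)
    (hx : x < t) (hy : y < t) : _root_.veblen x y < t :=
  lt_of_lt_of_eq ((_root_.veblen_isNormal x).strictMono hy) (sc_fp hsc hx)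

theorem omega0_opow_lt_ord {c : Cardinal.{0}} (hreg : c.IsRegular) (hc : Cardinal.aleph0 < c) :
    ∀ b, b < c.ord → omega0 ^ b < c.ord := by
  intro b
  induction b using Ordinal.limitRecOn with
  | zero =>
    intro _
    rw [opow_zero]
    refine lt_of_lt_of_le one_lt_omega0 ?_
    rw [← Cardinal.ord_aleph0]
    exact Cardinal.ord_le_ord.2 hc.le
  | add_one o ih =>
    intro hb
    have ho : o < c.ord := (Order.lt_succ o).trans hb
    rw [opow_add_one, Cardinal.lt_ord, Ordinal.card_mul]
    exact Cardinal.mul_lt_of_lt hreg.1 (Cardinal.lt_ord.1 (ih ho))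
      (by rw [Ordinal.card_omega0]; exact hc)
  | limit o ho ih =>
    intro hb
    have heq := IsNormal.bsup_eq.{0,0} (isNormal_opow one_lt_omega0) ho
    rw [← heq]
    refine Ordinal.bsup_lt_ord ?_ (fun i hi => ih i hi (hi.trans hb))
    rw [hreg.cof_ord]
    exact Cardinal.lt_ord.1 hb

noncomputable def kapb (θ : Ordinal.{0}) : Cardinal :=
  Order.succ (max Cardinal.aleph0 θ.card)

theorem kapb_reg (θ : Ordinal.{0}) : (kapb θ).IsRegular :=
  Cardinal.isRegular_succ (le_max_left _ _)

theorem aleph0_lt_kapb (θ : Ordinal.{0}) : Cardinal.aleph0 < kapb θ :=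
  (le_max_left _ _).trans_lt (Order.lt_succ _)

theorem OmegaB_eq (θ : Ordinal.{0}) : OmegaB θ = (kapb θ).ord := by
  have hmem : (kapb θ).ord ∈ {o | θ < o ∧ o.card.ord = o ∧ Cardinal.aleph0 < o.card} := by
    refine ⟨?_, ?_, ?_⟩
    · exact Cardinal.lt_ord.2 ((le_max_right _ _).trans_lt (Order.lt_succ _))
    · rw [Cardinal.card_ord]
    · rw [Cardinal.card_ord]; exact aleph0_lt_kapb θ
  refine le_antisymm (csInf_le' hmem) (le_csInf ⟨_, hmem⟩ ?_)
  rintro o ⟨h1, h2, h3⟩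
  have hco : θ.card < o.card := by
    by_contra hle
    push_neg at hle
    have : o ≤ θ := by
      calc o = o.card.ord := h2.symm
        _ ≤ θ.card.ord := Cardinal.ord_le_ord.2 hle
        _ ≤ θ := Cardinal.ord_card_le θ
    exact absurd h1 this.not_gt
  calc (kapb θ).ord ≤ o.card.ord :=
        Cardinal.ord_le_ord.2 (Order.succ_le_of_lt (max_lt h3 hco))
    _ = o := h2

theorem veblen_lt_ord' {c : Cardinal.{0}} (hreg : c.IsRegular) (hc : Cardinal.aleph0 < c) :
    ∀ ξ, ξ < c.ord → ∀ b, b < c.ord → _root_.veblen ξ b < c.ord := by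
  intro ξ
  refine Ordinal.lt_wf.induction
    (C := fun ξ => ξ < c.ord → ∀ b, b < c.ord → _root_.veblen ξ b < c.ord) ξ ?_
  intro ξ ih hξ b hb
  rcases eq_or_ne ξ 0 with rfl | h0
  · rw [_root_.veblen_zero]
    exact omega0_opow_lt_ord hreg hc b hb
  · rw [_root_.veblen_pos h0]
    exact Cardinal.derivFamily_lt_ord hreg (by rw [Cardinal.mk_toType]; exact Cardinal.lt_ord.1 hξ)
      hc.ne' (fun i b' hb' => ih _ ((typein_lt_type _ i).trans_eq (type_toType ξ))
        (((typein_lt_type _ i).trans_eq (type_toType ξ)).trans hξ) b' hb') hb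

noncomputable def scStep (x : Ordinal) : Ordinal :=
  max (x + 1) (⨆ p : x.ToType × x.ToType,
    (_root_.veblen (((ToType.mk (o := x))).symm p.1).1 (((ToType.mk (o := x))).symm p.2).1 + 1))

theorem lt_scStep (x : Ordinal) : x < scStep x :=
  lt_of_lt_of_le (by rw [Ordinal.add_one_eq_succ]; exact Order.lt_succ x) (le_max_left _ _)

theorem veblen_lt_scStep {ξ b x : Ordinal} (hξ : ξ < x) (hb : b < x) :
    _root_.veblen ξ b < scStep x := by
  have key := le_ciSup (Ordinal.bddAbove_range (fun p : x.ToType × x.ToType =>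
      (_root_.veblen (((ToType.mk (o := x))).symm p.1).1 (((ToType.mk (o := x))).symm p.2).1 + 1)))
    (⟨(ToType.mk (o := x)) ⟨ξ, hξ⟩, (ToType.mk (o := x)) ⟨b, hb⟩⟩ : x.ToType × x.ToType)
  simp only [OrderIso.symm_apply_apply] at key
  refine lt_of_lt_of_le (lt_of_lt_of_le ?_ key) (le_max_right _ _)
  rw [Ordinal.add_one_eq_succ]; exact Order.lt_succ _

noncomputable def scNext (δ : Ordinal) : Ordinal := ⨆ n : ℕ, scStep^[n] (δ + 1)

theorem tseq_le_scNext (δ : Ordinal) (n : ℕ) : scStep^[n] (δ + 1) ≤ scNext δ :=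
  le_ciSup (Ordinal.bddAbove_range _) n

theorem tseq_mono (δ : Ordinal) : Monotone (fun n => scStep^[n] (δ + 1)) :=
  monotone_nat_of_le_succ (fun n => by
    rw [Function.iterate_succ_apply']; exact (lt_scStep _).le)

theorem tseq_lt_scNext (δ : Ordinal) (n : ℕ) : scStep^[n] (δ + 1) < scNext δ := by
  refine lt_of_lt_of_le ?_ (tseq_le_scNext δ (n + 1))
  rw [Function.iterate_succ_apply']; exact lt_scStep _

theorem lt_scNext (δ : Ordinal) : δ < scNext δ := by
  have h0 := tseq_le_scNext δ 0
  simp only [Function.iterate_zero, id_eq] at h0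
  exact lt_of_lt_of_le (by rw [Ordinal.add_one_eq_succ]; exact Order.lt_succ δ) h0

theorem exists_tseq {δ c : Ordinal} (h : c < scNext δ) :
    ∃ n, c < scStep^[n] (δ + 1) := by
  rw [scNext] at h
  exact Ordinal.lt_iSup_iff.mp h

theorem scNext_isLimit (δ : Ordinal) : Order.IsSuccLimit (scNext δ) := by
  refine Ordinal.isSuccLimit_iff.2 ⟨?_, ?_⟩
  · exact ((zero_le : (0 : Ordinal) ≤ δ).trans_lt (lt_scNext δ)).ne'
  · refine Order.isSuccPrelimit_of_succ_lt (fun a ha => ?_)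
    obtain ⟨n, hn⟩ := exists_tseq ha
    exact lt_of_le_of_lt (Order.succ_le_of_lt hn) (tseq_lt_scNext δ n)

theorem sc_scNext (δ : Ordinal) : StronglyCritical (scNext δ) := by
  refine sc_of_commonFp ((zero_le : (0 : Ordinal) ≤ δ).trans_lt (lt_scNext δ)).ne' ?_
  intro ξ hξ
  refine le_antisymm ?_ (_root_.le_veblen _ _)
  rw [(_root_.veblen_isNormal ξ).le_iff_forall_le (scNext_isLimit δ)]
  intro b hb
  obtain ⟨n1, h1⟩ := exists_tseq hξ
  obtain ⟨n2, h2⟩ := exists_tseq hb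
  have hξ' : ξ < scStep^[max n1 n2] (δ + 1) :=
    h1.trans_le (tseq_mono δ (le_max_left n1 n2))
  have hb' : b < scStep^[max n1 n2] (δ + 1) :=
    h2.trans_le (tseq_mono δ (le_max_right n1 n2))
  have hlt : _root_.veblen ξ b < scStep^[max n1 n2 + 1] (δ + 1) := by
    rw [Function.iterate_succ_apply']; exact _root_.veblen_lt_scStep hξ' hb'
  exact (hlt.trans (tseq_lt_scNext δ _)).le

theorem not_bddAbove_sc : ¬ BddAbove {γ | StronglyCritical γ} := by
  rintro ⟨u, hu⟩
  exact absurd (hu (sc_scNext u)) (not_le.2 (lt_scNext u))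

theorem scStep_lt_ord {c : Cardinal} (hreg : c.IsRegular) (hc : Cardinal.aleph0 < c)
    {x : Ordinal} (hx : x < c.ord) : scStep x < c.ord := by
  apply max_lt
  · rw [Ordinal.add_one_eq_succ]
    exact (Cardinal.isSuccLimit_ord hreg.1).succ_lt hx
  · apply Cardinal.iSup_lt_ord_of_isRegular hreg
    · have hcard : (Cardinal.mk (x.ToType × x.ToType)) = x.card * x.card := by
        simp [Cardinal.mk_prod, Cardinal.mk_toType]
      rw [hcard]
      exact Cardinal.mul_lt_of_lt hreg.1 (Cardinal.lt_ord.1 hx) (Cardinal.lt_ord.1 hx)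
    · intro p
      have h1 : ((((ToType.mk (o := x))).symm p.1) : Ordinal) < x := (((ToType.mk (o := x))).symm p.1).2
      have h2 : ((((ToType.mk (o := x))).symm p.2) : Ordinal) < x := (((ToType.mk (o := x))).symm p.2).2
      have := _root_.veblen_lt_ord' hreg hc _ (h1.trans hx) _ (h2.trans hx)
      rw [Ordinal.add_one_eq_succ]
      exact (Cardinal.isSuccLimit_ord hreg.1).succ_lt this

theorem scNext_lt_ord {c : Cardinal} (hreg : c.IsRegular) (hc : Cardinal.aleph0 < c)
    {δ : Ordinal} (hδ : δ < c.ord) : scNext δ < c.ord := by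
  rw [scNext]
  apply Cardinal.iSup_lt_ord_of_isRegular hreg (by rw [Cardinal.mk_nat]; exact hc)
  intro n
  induction n with
  | zero =>
    simp only [Function.iterate_zero, id_eq]
    rw [Ordinal.add_one_eq_succ]
    exact (Cardinal.isSuccLimit_ord hreg.1).succ_lt hδ
  | succ n ih =>
    rw [Function.iterate_succ_apply']
    exact scStep_lt_ord hreg hc ih

theorem mem_closure_of_sc (S : Set Ordinal) (h0 : (0 : Ordinal) ∈ S)
    (hadd : ∀ x ∈ S, ∀ y ∈ S, x + y ∈ S) (hveb : ∀ x ∈ S, ∀ y ∈ S, _root_.veblen x y ∈ S)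
    (δ : Ordinal) : (∀ μ ≤ δ, StronglyCritical μ → μ ∈ S) → δ ∈ S := by
  refine Ordinal.lt_wf.induction
    (C := fun δ => (∀ μ ≤ δ, StronglyCritical μ → μ ∈ S) → δ ∈ S) δ ?_
  intro δ ih hSC
  rcases eq_or_ne δ 0 with rfl | hδ0
  · exact h0
  by_cases hsc : StronglyCritical δ
  · exact hSC δ le_rfl hsc
  have hδpos : 0 < δ := pos_iff_ne_zero.2 hδ0
  have hvv : _root_.veblen δ δ ≠ δ :=
    ((_root_.le_veblen_zero δ).trans_lt ((_root_.veblen_isNormal δ).strictMono hδpos)).ne'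
  have haA0 : sInf {ξ | _root_.veblen ξ δ ≠ δ} ∈ {ξ | _root_.veblen ξ δ ≠ δ} :=
    csInf_mem (s := {ξ | _root_.veblen ξ δ ≠ δ}) ⟨δ, hvv⟩
  have haA : _root_.veblen (sInf {ξ | _root_.veblen ξ δ ≠ δ}) δ ≠ δ := haA0
  have haδ : sInf {ξ | _root_.veblen ξ δ ≠ δ} ≤ δ := csInf_le' hvv
  have hfp : ∀ ξ < sInf {ξ | _root_.veblen ξ δ ≠ δ}, _root_.veblen ξ δ = δ := by
    intro ξ hξ
    by_contra hne
    exact absurd hξ (csInf_le' (s := {ξ | _root_.veblen ξ δ ≠ δ}) (a := ξ) hne).not_gt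
  set a := sInf {ξ | _root_.veblen ξ δ ≠ δ} with ha
  rcases eq_or_ne a 0 with ha0 | ha0
  · rw [ha0, _root_.veblen_zero] at haA
    by_cases hprin : Principal (· + ·) δ
    · rcases Ordinal.principal_add_iff_zero_or_omega0_opow.1 hprin with h | ⟨e, he⟩
      · exact absurd h hδ0
      · have he' : omega0 ^ e = δ := he
        have he1 : e ≤ δ := by
          rw [← he']
          exact right_le_opow e one_lt_omega0
        have he2 : e < δ := he1.lt_of_ne (by
          intro h
          rw [h] at he'
          exact haA he')
        have heS : e ∈ S := ih e he2 (fun μ hμ hμ' => hSC μ (hμ.trans he1) hμ')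
        have := hveb 0 h0 e heS
        rwa [_root_.veblen_zero, he'] at this
    · unfold Ordinal.Principal Ordinal.IsPrincipal at hprin
      push_neg at hprin
      obtain ⟨x, y, hx, hy, hxy⟩ := hprin
      have hx0 : x ≠ 0 := by
        rintro rfl
        rw [zero_add] at hxy
        exact hxy.not_gt hy
      have ht1 : x + (δ - x) = δ := Ordinal.add_sub_cancel_of_le hx.le
      have ht3 : δ - x < δ := (Ordinal.sub_le.2 hxy).trans_lt hy
      have hxS : x ∈ S := ih x hx (fun μ hμ hμ' => hSC μ (hμ.trans hx.le) hμ')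
      have htS : (δ - x) ∈ S := ih _ ht3 (fun μ hμ hμ' => hSC μ (hμ.trans ht3.le) hμ')
      have := hadd x hxS _ htS
      rwa [ht1] at this
  · obtain ⟨b, hb⟩ := (fp_iff_derivFamily (f := familyOfBFamily a (fun ξ _ => _root_.veblen ξ))
      (fun i => _root_.veblen_isNormal _) (a := δ)).1
      (fun i => hfp _ ((typein_lt_type _ i).trans_eq (type_toType a)))
    have hvb : _root_.veblen a b = δ := by rw [_root_.veblen_pos ha0]; exact hb
    have hbδ : b ≤ δ := hvb ▸ (_root_.veblen_isNormal a).strictMono.le_apply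
    have hbδ' : b < δ := hbδ.lt_of_ne (by
      rintro rfl
      exact haA hvb)
    have haδ' : a < δ := haδ.lt_of_ne (by
      intro h
      rw [h] at hvb
      exact hsc (le_antisymm
        (((_root_.veblen_isNormal δ).monotone (zero_le : (0 : Ordinal) ≤ b)).trans hvb.le)
        (_root_.le_veblen_zero δ)))
    have haS : a ∈ S := ih a haδ' (fun μ hμ hμ' => hSC μ (hμ.trans haδ'.le) hμ')
    have hbS : b ∈ S := ih b hbδ' (fun μ hμ hμ' => hSC μ (hμ.trans hbδ'.le) hμ')
    have := hveb a haS b hbS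
    rwa [hvb] at this

theorem psiB_def (θ α : Ordinal) :
    psiB θ α = sInf {β | β ∉ BB θ α} :=
  WellFounded.fix_eq _ _ α

theorem BB_mono {θ α α' : Ordinal} (h : α ≤ α') : BB θ α ⊆ BB θ α' := by
  intro x hx
  simp only [BB, closB, Set.mem_sInter, Set.mem_setOf_eq] at hx ⊢
  rintro S ⟨h0, hΩ, hΓ, hadd, hveb, hψ⟩
  exact hx S ⟨h0, hΩ, hΓ, hadd, hveb, fun ξ hξ hmem => hψ ξ (hξ.trans_le h) hmem⟩

theorem gammaSucc_spec (δ : Ordinal) :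
    δ < gammaSucc δ ∧ StronglyCritical (gammaSucc δ) := by
  have h : gammaSucc δ ∈ {γ | δ < γ ∧ StronglyCritical γ} :=
    csInf_mem (s := {γ | δ < γ ∧ StronglyCritical γ})
      ⟨scNext δ, lt_scNext δ, sc_scNext δ⟩
  exact h

theorem gammaSucc_le {δ μ : Ordinal} (h1 : δ < μ) (h2 : StronglyCritical μ) :
    gammaSucc δ ≤ μ :=
  csInf_le' ⟨h1, h2⟩

theorem stmt13 (θ γ : Ordinal) :
    psiB θ (γ + 1) ≤ gammaSucc (psiB θ γ) := by
  by_cases hT : {β | β ∉ BB θ γ}.Nonempty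
  · obtain ⟨hδΛ, hscΛ⟩ := gammaSucc_spec (psiB θ γ)
    have hψmono : ∀ ξ ≤ γ, psiB θ ξ ≤ psiB θ γ := by
      intro ξ hξ
      rw [psiB_def θ ξ, psiB_def θ γ]
      exact csInf_le_csInf (OrderBot.bddBelow _) hT
        (fun β hβ hmem => hβ (BB_mono hξ hmem))
    have hΛΩ : OmegaB θ ≠ gammaSucc (psiB θ γ) := by
      rcases lt_or_ge (psiB θ γ) (OmegaB θ) with hlt | hge
      · have hμ : scNext (psiB θ γ) < OmegaB θ := by
          rw [OmegaB_eq] at hlt ⊢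
          exact scNext_lt_ord (kapb_reg θ) (aleph0_lt_kapb θ) hlt
        exact (lt_of_le_of_lt (gammaSucc_le (lt_scNext _) (sc_scNext _)) hμ).ne'
      · exact (lt_of_le_of_lt hge hδΛ).ne
    have hΓθ : Gamma θ ≤ psiB θ γ := by
      rw [psiB_def θ γ]
      refine le_csInf hT ?_
      intro β hβ
      by_contra hlt
      push_neg at hlt
      refine hβ ?_
      simp only [BB, closB, Set.mem_sInter, Set.mem_setOf_eq]
      rintro S ⟨h0, hΩ, hΓ, hadd, hveb, hψ⟩
      refine mem_closure_of_sc S h0 hadd hveb β ?_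
      intro μ hμβ hscμ
      obtain ⟨b', hb'⟩ := enumOrd_surjective not_bddAbove_sc hscμ
      have hb'' : Gamma b' = μ := hb'
      have hblt : b' < θ := by
        have := (enumOrd_strictMono not_bddAbove_sc).lt_iff_lt
          (a := b') (b := θ)
        refine this.1 ?_
        show Gamma b' < Gamma θ
        rw [hb'']
        exact hμβ.trans_lt hlt
      exact hb'' ▸ hΓ b' hblt.le
    have hΓ_lt : ∀ β' ≤ θ, Gamma β' < gammaSucc (psiB θ γ) := by
      intro β' hβ'
      have hmono : Gamma β' ≤ Gamma θ :=
        (enumOrd_strictMono not_bddAbove_sc).monotone hβ'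
      exact lt_of_le_of_lt (hmono.trans hΓθ) hδΛ
    have hΛnot : gammaSucc (psiB θ γ) ∉ BB θ (γ + 1) := by
      intro hΛmem
      simp only [BB, closB, Set.mem_sInter, Set.mem_setOf_eq] at hΛmem
      have hmem := hΛmem {x | x ≠ gammaSucc (psiB θ γ)} ?_
      · exact hmem rfl
      refine ⟨?_, ?_, ?_, ?_, ?_, ?_⟩
      · exact ((zero_le : (0 : Ordinal) ≤ _).trans_lt hδΛ).ne
      · exact hΛΩ
      · exact fun β' hβ' => (hΓ_lt β' hβ').ne
      · intro x hx y hy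
        show x + y ≠ gammaSucc (psiB θ γ)
        rcases lt_or_gt_of_ne hx with hx' | hx'
        · rcases lt_or_gt_of_ne hy with hy' | hy'
          · exact (sc_principal_add hscΛ hx' hy').ne
          · exact (lt_of_lt_of_le hy' (le_add_self : y ≤ x + y)).ne'
        · exact (lt_of_lt_of_le hx' (le_self_add : x ≤ x + y)).ne'
      · intro x hx y hy
        show _root_.veblen x y ≠ gammaSucc (psiB θ γ)
        rcases lt_or_gt_of_ne hx with hx' | hx'
        · rcases lt_or_gt_of_ne hy with hy' | hy'
          · exact (sc_veblen_closed hscΛ hx' hy').ne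
          · exact (lt_of_lt_of_le hy' (_root_.le_veblen x y)).ne'
        · exact (lt_of_lt_of_le hx' (_root_.left_le_veblen x y)).ne'
      · intro ξ hξ _
        show psiB θ ξ ≠ gammaSucc (psiB θ γ)
        have hξγ : ξ ≤ γ := by
          rw [Ordinal.add_one_eq_succ] at hξ
          exact Order.lt_succ_iff.1 hξ
        exact (lt_of_le_of_lt (hψmono ξ hξγ) hδΛ).ne
    rw [psiB_def θ (γ + 1)]
    exact csInf_le' hΛnot
  · rw [psiB_def θ (γ + 1)]
    have hempty : {β | β ∉ BB θ (γ + 1)} = ∅ := by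
      rw [Set.not_nonempty_iff_eq_empty] at hT
      rw [← Set.subset_empty_iff, ← hT]
      exact fun β hβ hmem => hβ (BB_mono (le_self_add : γ ≤ γ + 1) hmem)
    rw [hempty, Ordinal.sInf_empty]
    exact (zero_le : (0 : Ordinal) ≤ _)
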